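/- Let P and Q be orthogonal projections on a real Hilbert space H (bounded selfadjoint idempotents) with ‖P − Q‖ < 1. Then there exists a bijective isometric (orthogonal) operator W : H → H such that W ∘ Q = P ∘ W; in particular W maps the range of Q onto the range of P, so the ranges of P and Q are unitarily equivalent. -/

import Mathlib

open scoped RealInnerProductSpace


noncomputable def sqc : ℕ → ℝ
  | 0 => 0
  | 1 => 1/2
  | (n+2) => (1/2) * ∑ i ∈ (Finset.Ioo 0 (n+2)).attach,
      sqc i.1 * sqc (n + 2 - i.1)
  decreasing_by
  · exact (Finset.mem_Ioo.mp i.2).2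
  · have h := Finset.mem_Ioo.mp i.2; omega

lemma sqc_nonneg : ∀ n, 0 ≤ sqc n := by
  intro n
  induction n using Nat.strong_induction_on with
  | _ n ih =>
    match n with
    | 0 => simp [sqc]
    | 1 => norm_num [sqc]
    | (n+2) =>
      rw [sqc]
      apply mul_nonneg (by norm_num)
      apply Finset.sum_nonneg
      rintro ⟨i, hi⟩ -
      have h := Finset.mem_Ioo.mp hi
      have h2 : n + 2 - i < n + 2 := by omega
      exact mul_nonneg (ih i (by omega)) (ih _ h2)

lemma sqc_conv (n : ℕ) :
    ∑ kl ∈ Finset.HasAntidiagonal.antidiagonal n, sqc kl.1 * sqc kl.2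
      = 2 * sqc n - (if n = 1 then 1 else 0) := by
  rw [Finset.Nat.sum_antidiagonal_eq_sum_range_succ_mk]
  have hsub : ∑ i ∈ Finset.range (n+1), sqc i * sqc (n-i)
      = ∑ i ∈ Finset.Ioo 0 n, sqc i * sqc (n-i) := by
    symm
    apply Finset.sum_subset
    · intro i hi
      simp only [Finset.mem_Ioo] at hi
      simp only [Finset.mem_range]
      omega
    · intro i hi hni
      simp only [Finset.mem_range] at hi
      simp only [Finset.mem_Ioo, not_and, not_lt] at hni
      rcases Nat.eq_zero_or_pos i with h0 | h0
      · subst h0; simp [sqc]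
      · have : i = n := le_antisymm (by omega) (hni h0)
        subst this
        simp [sqc]
  rw [hsub]
  match n with
  | 0 => simp [sqc]
  | 1 => rw [show Finset.Ioo 0 1 = ∅ from rfl]; simp [sqc]
  | (m+2) =>
    rw [show sqc (m+2) = (1/2) * ∑ i ∈ (Finset.Ioo 0 (m+2)).attach,
      sqc i.1 * sqc (m + 2 - i.1) from by rw [sqc]]
    rw [Finset.sum_attach (Finset.Ioo 0 (m+2)) (fun i => sqc i * sqc (m + 2 - i))]
    rw [if_neg (by omega)]
    ring

lemma sqc_sum_le (N : ℕ) : ∑ i ∈ Finset.range N, sqc i ≤ 1 := by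
  induction N with
  | zero => simp
  | succ N ih =>
    rcases Nat.eq_zero_or_pos N with h0 | hN
    · subst h0; simp [sqc]
    -- key inequality: double sum over antidiagonals ≤ (∑_{range N})^2
    have key : ∑ n ∈ Finset.range (N+1), ∑ kl ∈ Finset.HasAntidiagonal.antidiagonal n, sqc kl.1 * sqc kl.2
        ≤ (∑ i ∈ Finset.range N, sqc i) * (∑ i ∈ Finset.range N, sqc i) := by
      have hdisj : (↑(Finset.range (N+1)) : Set ℕ).PairwiseDisjoint Finset.HasAntidiagonal.antidiagonal := by
        intro m _ n _ hmn
        simp only [Finset.disjoint_left]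
        intro p hp hp'
        rw [Finset.HasAntidiagonal.mem_antidiagonal] at hp hp'
        omega
      rw [← Finset.sum_biUnion hdisj]
      set U := (Finset.range (N+1)).biUnion Finset.HasAntidiagonal.antidiagonal with hU
      have hstep : ∑ p ∈ U, sqc p.1 * sqc p.2
          = ∑ p ∈ U ∩ (Finset.range N ×ˢ Finset.range N), sqc p.1 * sqc p.2 := by
        symm
        apply Finset.sum_subset Finset.inter_subset_left
        intro p hpU hp
        have hmem : p.1 + p.2 ≤ N := by
          simp only [hU, Finset.mem_biUnion, Finset.mem_range,
            Finset.HasAntidiagonal.mem_antidiagonal] at hpU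
          obtain ⟨m, hm, he⟩ := hpU
          omega
        have : p.1 ∉ Finset.range N ∨ p.2 ∉ Finset.range N := by
          by_contra hc
          push_neg at hc
          exact hp (Finset.mem_inter.mpr ⟨hpU, Finset.mem_product.mpr ⟨hc.1, hc.2⟩⟩)
        rcases this with h | h <;> simp only [Finset.mem_range, not_lt] at h
        · have : p.2 = 0 := by omega
          rw [this]; simp [sqc]
        · have : p.1 = 0 := by omega
          rw [this]; simp [sqc]
      rw [hstep, Finset.sum_mul_sum, ← Finset.sum_product']
      apply Finset.sum_le_sum_of_subset_of_nonneg Finset.inter_subset_right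
      intro p _ _
      exact mul_nonneg (sqc_nonneg _) (sqc_nonneg _)
    have hconv : ∑ n ∈ Finset.range (N+1), ∑ kl ∈ Finset.HasAntidiagonal.antidiagonal n, sqc kl.1 * sqc kl.2
        = 2 * ∑ i ∈ Finset.range (N+1), sqc i - 1 := by
      rw [Finset.sum_congr rfl (fun n _ => sqc_conv n)]
      rw [Finset.sum_sub_distrib, ← Finset.mul_sum]
      congr 1
      rw [Finset.sum_ite_eq' (Finset.range (N+1)) 1 (fun _ => (1:ℝ))]
      rw [if_pos (Finset.mem_range.mpr (by omega))]
    have hsq : (∑ i ∈ Finset.range N, sqc i) * (∑ i ∈ Finset.range N, sqc i) ≤ 1 := by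
      have h0 : 0 ≤ ∑ i ∈ Finset.range N, sqc i :=
        Finset.sum_nonneg fun i _ => sqc_nonneg i
      nlinarith
    rw [hconv] at key
    linarith

lemma sqc_summable : Summable sqc :=
  summable_of_sum_range_le sqc_nonneg sqc_sum_le

lemma sqc_tsum_le : ∑' n, sqc n ≤ 1 :=
  sqc_summable.tsum_le_of_sum_range_le sqc_sum_le

lemma sqc_zero : sqc 0 = 0 := by simp [sqc]

set_option maxHeartbeats 2000000 in
set_option synthInstance.maxHeartbeats 1000000 in
/-- Two orthogonal projections at distance `< 1` have unitarily equivalent ranges: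
there is an orthogonal (bijective isometric) operator `W` with `W ∘ Q = P ∘ W`,
so `W` maps the range of `Q` onto the range of `P`. -/
theorem projections_close_imp_unitarily_equivalent
    {H : Type*} [NormedAddCommGroup H] [InnerProductSpace ℝ H] [CompleteSpace H]
    (P Q : H →L[ℝ] H)
    (hPsa : ∀ x y : H, ⟪P x, y⟫ = ⟪x, P y⟫) (hPidem : P.comp P = P)
    (hQsa : ∀ x y : H, ⟪Q x, y⟫ = ⟪x, Q y⟫) (hQidem : Q.comp Q = Q)
    (hnorm : ‖P - Q‖ < 1) :
    ∃ W : H ≃ₗᵢ[ℝ] H, (∀ x : H, W (Q x) = P (W x)) ∧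
      ⇑W '' Set.range ⇑Q = Set.range ⇑P := by
  classical
  have hP2 : P * P = P := hPidem
  have hQ2 : Q * Q = Q := hQidem
  have hPs : star P = P :=
    ContinuousLinearMap.isSelfAdjoint_iff_isSymmetric.mpr fun x y => hPsa x y
  have hQs : star Q = Q :=
    ContinuousLinearMap.isSelfAdjoint_iff_isSymmetric.mpr fun x y => hQsa x y
  have hPP : ∀ x : H →L[ℝ] H, P * (P * x) = P * x := fun x => by rw [← mul_assoc, hP2]
  have hQQ : ∀ x : H →L[ℝ] H, Q * (Q * x) = Q * x := fun x => by rw [← mul_assoc, hQ2]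
  set d : H →L[ℝ] H := (P - Q) * (P - Q) with hd
  have hdP : d * P = P * d := by
    simp only [hd, sub_mul, mul_sub, mul_assoc, hP2, hQ2, hPP, hQQ]
    abel
  have hdQ : d * Q = Q * d := by
    simp only [hd, sub_mul, mul_sub, mul_assoc, hP2, hQ2, hPP, hQQ]
    abel
  have hd_star : star d = d := by rw [hd, star_mul, star_sub, hPs, hQs]
  have hd_norm : ‖d‖ < 1 := by
    have h1 : ‖d‖ ≤ ‖P - Q‖ * ‖P - Q‖ := norm_mul_le _ _
    nlinarith [norm_nonneg (P - Q)]
  -- the square root of 1 - d via the power series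
  have hfnorm : ∀ n, ‖sqc n • d ^ n‖ ≤ sqc n * ‖d‖ := by
    intro n
    rcases Nat.eq_zero_or_pos n with h0 | hpos
    · subst h0; simp [sqc_zero]
    · have h5 : ‖sqc n • d ^ n‖ ≤ ‖sqc n‖ * ‖d ^ n‖ := norm_smul_le (sqc n) (d ^ n)
      refine le_trans h5 ?_
      rw [Real.norm_of_nonneg (sqc_nonneg _)]
      refine mul_le_mul_of_nonneg_left ?_ (sqc_nonneg _)
      calc ‖d ^ n‖ ≤ ‖d‖ ^ n := norm_pow_le' d hpos
        _ ≤ ‖d‖ := pow_le_of_le_one (norm_nonneg d) hd_norm.le (by omega)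
  have hnorm_sum : Summable (fun n => ‖sqc n • d ^ n‖) :=
    Summable.of_nonneg_of_le (fun n => norm_nonneg _) hfnorm (sqc_summable.mul_right ‖d‖)
  have hfsum : Summable (fun n => sqc n • d ^ n) := hnorm_sum.of_norm
  set g : H →L[ℝ] H := ∑' n, sqc n • d ^ n with hg
  have hg_lt : ‖g‖ < 1 := by
    have h1 : ‖g‖ ≤ ∑' n, ‖sqc n • d ^ n‖ := norm_tsum_le_tsum_norm hnorm_sum
    have h2 : ∑' n, ‖sqc n • d ^ n‖ ≤ ∑' n, sqc n * ‖d‖ :=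
      Summable.tsum_le_tsum hfnorm hnorm_sum (sqc_summable.mul_right ‖d‖)
    have h3 : ∑' n, sqc n * ‖d‖ = (∑' n, sqc n) * ‖d‖ := tsum_mul_right
    have h4 : (∑' n, sqc n) * ‖d‖ ≤ 1 * ‖d‖ :=
      mul_le_mul_of_nonneg_right sqc_tsum_le (norm_nonneg d)
    rw [one_mul] at h4
    linarith
  have hgcomm : ∀ x : H →L[ℝ] H, d * x = x * d → g * x = x * g := by
    intro x hx
    have hx' : Commute d x := hx
    rw [hg, ← hfsum.tsum_mul_right x, ← hfsum.tsum_mul_left x]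
    exact tsum_congr fun n => by
      rw [smul_mul_assoc, (hx'.pow_left n).eq, mul_smul_comm]
  have hg_star : star g = g := by
    rw [hg, tsum_star]
    exact tsum_congr fun n => by rw [star_smul, star_pow, hd_star, star_trivial]
  have hgg : g * g = g + g - d := by
    have h1 : g * g = ∑' n, (2 * sqc n - (if n = 1 then 1 else 0)) • d ^ n := by
      rw [hg, tsum_mul_tsum_eq_tsum_sum_antidiagonal_of_summable_norm hnorm_sum hnorm_sum]
      refine tsum_congr fun n => ?_
      rw [← sqc_conv n, Finset.sum_smul]
      refine Finset.sum_congr rfl fun kl hkl => ?_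
      rw [smul_mul_smul_comm, ← pow_add, Finset.HasAntidiagonal.mem_antidiagonal.mp hkl]
    have h2 : ∀ n : ℕ, (2 * sqc n - (if n = 1 then 1 else 0)) • d ^ n
        = (sqc n • d ^ n + sqc n • d ^ n) - (if n = 1 then (1:ℝ) else 0) • d ^ n := by
      intro n; rw [sub_smul, two_mul, add_smul]
    have hesum : Summable (fun n : ℕ => (if n = 1 then (1:ℝ) else 0) • d ^ n) := by
      apply summable_of_ne_finset_zero (s := {1})
      intro n hn
      simp only [Finset.mem_singleton] at hn
      simp [if_neg hn]
    have he : ∑' n : ℕ, (if n = 1 then (1:ℝ) else 0) • d ^ n = d := by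
      rw [tsum_eq_single 1 (fun n hn => by simp [if_neg hn])]
      simp
    calc g * g = ∑' n, ((sqc n • d ^ n + sqc n • d ^ n)
          - (if n = 1 then (1:ℝ) else 0) • d ^ n) := by rw [h1]; exact tsum_congr h2
      _ = (∑' n, (sqc n • d ^ n + sqc n • d ^ n))
          - ∑' n, (if n = 1 then (1:ℝ) else 0) • d ^ n :=
        Summable.tsum_sub (hfsum.add hfsum) hesum
      _ = g + g - d := by rw [Summable.tsum_add hfsum hfsum, he, hg]
  have hb2 : (1 - g) * (1 - g) = 1 - d := by
    have h : (1 - g) * (1 - g) = 1 - g - g + g * g := by noncomm_ring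
    rw [h, hgg]; abel
  have hbstar : star (1 - g) = 1 - g := by rw [star_sub, star_one, hg_star]
  set bu : (H →L[ℝ] H)ˣ := Units.oneSub g hg_lt with hbu
  have hbuval : (bu : H →L[ℝ] H) = 1 - g := rfl
  set c : H →L[ℝ] H := ↑bu⁻¹ with hc
  have hbc : (1 - g) * c = 1 := by rw [← hbuval]; exact bu.mul_inv
  have hcb : c * (1 - g) = 1 := by rw [← hbuval]; exact bu.inv_mul
  have hstar_c : star c = c := by
    have h1 : star c * (1 - g) = 1 := by
      have h0 : star ((1 - g) * c) = 1 := by rw [hbc, star_one]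
      rwa [star_mul, hbstar] at h0
    calc star c = star c * ((1 - g) * c) := by rw [hbc, mul_one]
      _ = (star c * (1 - g)) * c := by rw [mul_assoc]
      _ = c := by rw [h1, one_mul]
  set v : H →L[ℝ] H := P * Q + (1 - P) * (1 - Q) with hv
  have hv_star : star v = Q * P + (1 - Q) * (1 - P) := by
    rw [hv, star_add, star_mul, star_mul, star_sub, star_sub, star_one, hPs, hQs]
  have hvQ : v * Q = P * v := by
    simp only [hv, add_mul, mul_add, sub_mul, mul_sub, mul_one, one_mul, mul_assoc,
      hP2, hQ2, hPP, hQQ]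
    abel
  have hvsv : v * star v = 1 - d := by
    rw [hv_star]
    simp only [hv, hd, add_mul, mul_add, sub_mul, mul_sub, mul_one, one_mul, mul_assoc,
      hP2, hQ2, hPP, hQQ]
    abel
  have hsvv : star v * v = 1 - d := by
    rw [hv_star]
    simp only [hv, hd, add_mul, mul_add, sub_mul, mul_sub, mul_one, one_mul, mul_assoc,
      hP2, hQ2, hPP, hQQ]
    abel
  -- commutation of c with Q and star v
  have cdP : Commute d P := hdP
  have cdQ : Commute d Q := hdQ
  have cdsv : Commute d (star v) := by
    rw [hv_star]
    exact (cdQ.mul_right cdP).add_right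
      (((Commute.one_right d).sub_right cdQ).mul_right ((Commute.one_right d).sub_right cdP))
  have hbx : ∀ x : H →L[ℝ] H, g * x = x * g → (1 - g) * x = x * (1 - g) := by
    intro x h; rw [sub_mul, mul_sub, one_mul, mul_one, h]
  have hcx : ∀ x : H →L[ℝ] H, (1 - g) * x = x * (1 - g) → c * x = x * c := by
    intro x h
    have hco : Commute (bu : H →L[ℝ] H) x := by rw [hbuval]; exact h
    exact hco.units_inv_left.eq
  have hcQ : c * Q = Q * c := hcx Q (hbx Q (hgcomm Q hdQ))
  have hcsv : c * star v = star v * c := hcx _ (hbx _ (hgcomm _ cdsv.eq))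
  set u : H →L[ℝ] H := v * c with hu
  have hu_star : star u = c * star v := by rw [hu, star_mul, hstar_c]
  have huu : star u * u = 1 := by
    calc star u * u = (c * star v) * (v * c) := by rw [hu_star]
      _ = c * ((star v * v) * c) := by rw [mul_assoc, mul_assoc]
      _ = c * (((1 - g) * (1 - g)) * c) := by rw [hsvv, ← hb2]
      _ = c * ((1 - g) * ((1 - g) * c)) := by rw [mul_assoc (1-g) (1-g) c]
      _ = c * (1 - g) := by rw [hbc, mul_one]
      _ = 1 := hcb
  have huu' : u * star u = 1 := by
    calc u * star u = v * (c * (c * star v)) := by rw [hu_star, hu, mul_assoc]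
      _ = v * (c * (star v * c)) := by rw [hcsv]
      _ = v * ((c * star v) * c) := by rw [mul_assoc c (star v) c]
      _ = v * ((star v * c) * c) := by rw [hcsv]
      _ = ((v * star v) * c) * c := by rw [← mul_assoc, ← mul_assoc]
      _ = (((1 - g) * (1 - g)) * c) * c := by rw [hvsv, ← hb2]
      _ = 1 := by rw [mul_assoc (1-g) (1-g) c, hbc, mul_one, hbc]
  have huQ : u * Q = P * u := by
    calc u * Q = v * (c * Q) := by rw [hu, mul_assoc]
      _ = v * (Q * c) := by rw [hcQ]
      _ = (v * Q) * c := by rw [mul_assoc]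
      _ = (P * v) * c := by rw [hvQ]
      _ = P * u := by rw [hu, mul_assoc]
  -- now build the isometry
  have hleft : ∀ x : H, star u (u x) = x := by
    intro x
    have h := congrArg (fun T : H →L[ℝ] H => T x) huu
    simpa [ContinuousLinearMap.mul_apply] using h
  have hright : ∀ x : H, u (star u x) = x := by
    intro x
    have h := congrArg (fun T : H →L[ℝ] H => T x) huu'
    simpa [ContinuousLinearMap.mul_apply] using h
  let e : H ≃ₗ[ℝ] H :=
    LinearEquiv.ofLinear (u : H →ₗ[ℝ] H) ((star u : H →L[ℝ] H) : H →ₗ[ℝ] H)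
      (LinearMap.ext fun x => hright x) (LinearMap.ext fun x => hleft x)
  have he_app : ∀ x : H, e x = u x := fun _ => rfl
  have hinner : ∀ x y : H, ⟪e x, e y⟫ = ⟪x, y⟫ := by
    intro x y
    have h1 : ⟪(ContinuousLinearMap.adjoint u) (u x), y⟫ = ⟪u x, u y⟫ :=
      ContinuousLinearMap.adjoint_inner_left u y (u x)
    rw [← ContinuousLinearMap.star_eq_adjoint, hleft x] at h1
    rw [he_app, he_app, ← h1]
  refine ⟨e.isometryOfInner hinner, ?_, ?_⟩
  · intro x
    show u (Q x) = P (u x)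
    have h := congrArg (fun T : H →L[ℝ] H => T x) huQ
    simpa [ContinuousLinearMap.mul_apply] using h
  · ext y
    constructor
    · rintro ⟨-, ⟨x, rfl⟩, rfl⟩
      refine ⟨u x, ?_⟩
      show P (u x) = u (Q x)
      have h := congrArg (fun T : H →L[ℝ] H => T x) huQ
      simpa [ContinuousLinearMap.mul_apply] using h.symm
    · rintro ⟨z, rfl⟩
      refine ⟨Q (star u z), ⟨star u z, rfl⟩, ?_⟩
      show u (Q (star u z)) = P z
      have h := congrArg (fun T : H →L[ℝ] H => T (star u z)) huQ
      simp only [ContinuousLinearMap.mul_apply] at h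
      rw [h, hright]
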